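/- Let d : [0,∞) → ℝ be C² with d(t) > 0 for all t, satisfying d̈ = -k·(ḋ/d) - α(t) with k > 0 and α continuous and bounded. If d(t) → 0 as t → ∞, then ∫₀ᵀ α(τ) dτ → +∞ as T → ∞. -/

import Mathlib

open Real Filter

lemma barrier_aux (f : ℝ → ℝ) (B : ℝ) (hf : Differentiable ℝ f)
    (h0 : f 0 ≤ B) (hneg : ∀ t ≥ (0:ℝ), B < f t → deriv f t < 0) :
    ∀ t ≥ (0:ℝ), f t ≤ B := by
  intro t₁ ht₁
  by_contra hgt
  push_neg at hgt
  have ht₁0 : 0 < t₁ := by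
    rcases lt_or_eq_of_le ht₁ with h | h
    · exact h
    · exact absurd h0 (by rw [← h] at hgt; linarith)
  set S : Set ℝ := {t | t ∈ Set.Icc 0 t₁ ∧ f t ≤ B} with hS
  have hSne : S.Nonempty := ⟨0, ⟨le_refl 0, le_of_lt ht₁0⟩, h0⟩
  have hSbdd : BddAbove S := ⟨t₁, fun x hx => hx.1.2⟩
  have hSclosed : IsClosed S := by
    have : S = Set.Icc 0 t₁ ∩ f ⁻¹' Set.Iic B := by
      ext x; simp [hS, Set.mem_Icc, and_assoc]
    rw [this]
    exact isClosed_Icc.inter (isClosed_Iic.preimage hf.continuous)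
  set s := sSup S with hs
  have hsS : s ∈ S := hSclosed.csSup_mem hSne hSbdd
  have hst₁ : s < t₁ := lt_of_le_of_ne hsS.1.2 (fun h => by rw [h] at hsS; linarith [hsS.2])
  have hfs : f s ≤ B := hsS.2
  have hbig : ∀ x ∈ Set.Ioc s t₁, B < f x := by
    intro x hx
    by_contra hle
    push_neg at hle
    have : x ∈ S := ⟨⟨le_trans hsS.1.1 hx.1.le, hx.2⟩, hle⟩
    exact absurd (le_csSup hSbdd this) (not_le.mpr hx.1)
  have hanti : StrictAntiOn f (Set.Icc s t₁) := by
    apply strictAntiOn_of_deriv_neg (convex_Icc s t₁) hf.continuous.continuousOn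
    intro x hx
    rw [interior_Icc] at hx
    exact hneg x (le_trans hsS.1.1 hx.1.le) (hbig x ⟨hx.1, hx.2.le⟩)
  have := hanti (Set.left_mem_Icc.mpr hst₁.le) (Set.right_mem_Icc.mpr hst₁.le) hst₁
  linarith


/-- If d > 0 everywhere, satisfies d̈ = -k(ḋ/d) - α with k > 0 and α
continuous and bounded, and d(t) → 0 as t → ∞, then ∫₀ᵀ α → +∞. -/
theorem stmt_1
    (d α : ℝ → ℝ) (k : ℝ) (hk : 0 < k)
    (hd : ContDiff ℝ 2 d)
    (hpos : ∀ t ≥ (0:ℝ), d t > 0)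
    (hα_cont : Continuous α)
    (hα_bdd : ∃ M : ℝ, ∀ t ≥ (0:ℝ), |α t| ≤ M)
    (hode : ∀ t ≥ (0:ℝ),
      deriv (deriv d) t = -k * (deriv d t / d t) - α t)
    (hlim : Tendsto d atTop (nhds 0)) :
    Tendsto (fun T => ∫ τ in (0:ℝ)..T, α τ) atTop atTop := by
  obtain ⟨M, hM⟩ := hα_bdd
  have hM0 : 0 ≤ M := le_trans (abs_nonneg _) (hM 0 le_rfl)
  have hdd : Differentiable ℝ d ∧ Differentiable ℝ (deriv d) := by
    rw [show (2 : WithTop ℕ∞) = 1 + 1 from rfl, contDiff_succ_iff_deriv] at hd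
    exact ⟨hd.1, (hd.2.2).differentiable one_ne_zero⟩
  obtain ⟨hd1, hd2⟩ := hdd
  -- d is bounded above on [0,∞)
  obtain ⟨T₀, hT₀⟩ : ∃ T₀ : ℝ, ∀ t ≥ T₀, |d t| < d 0 := by
    obtain ⟨N, hN⟩ := (Metric.tendsto_atTop.mp hlim) (d 0) (hpos 0 le_rfl)
    exact ⟨N, fun t ht => by simpa [Real.dist_eq] using hN t ht⟩
  obtain ⟨x₀, -, hx₀⟩ := (isCompact_Icc (a := (0:ℝ)) (b := max T₀ 0)).exists_isMaxOn
    (Set.nonempty_Icc.mpr (le_max_right _ _)) hd1.continuous.continuousOn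
  set D : ℝ := max (d x₀) (d 0) with hD
  have hDpos : 0 < D := lt_of_lt_of_le (hpos 0 le_rfl) (le_max_right _ _)
  have hDbound : ∀ t ≥ (0:ℝ), d t ≤ D := by
    intro t ht
    rcases le_or_gt t (max T₀ 0) with h | h
    · exact le_trans (hx₀ ⟨ht, h⟩) (le_max_left _ _)
    · have := hT₀ t (le_trans (le_max_left _ _) h.le)
      calc d t ≤ |d t| := le_abs_self _
        _ ≤ d 0 := this.le
        _ ≤ D := le_max_right _ _
  -- bound on deriv d on [0,∞)
  set B : ℝ := max (deriv d 0) (M * D / k) with hB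
  have hderiv_bound : ∀ t ≥ (0:ℝ), deriv d t ≤ B := by
    apply barrier_aux (deriv d) B hd2 (le_max_left _ _)
    intro t ht hgt
    have hdt : 0 < d t := hpos t ht
    have h2 : M * D / k < deriv d t := lt_of_le_of_lt (le_max_right _ _) hgt
    have hdpos' : 0 < deriv d t := lt_of_le_of_lt (by positivity) h2
    have h3 : k * (deriv d t / D) ≤ k * (deriv d t / d t) := by
      gcongr
      exact hDbound t ht
    have h4 : M < k * (deriv d t / D) := by
      rw [show k * (deriv d t / D) = k * deriv d t / D from (mul_div_assoc _ _ _).symm,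
        lt_div_iff₀ hDpos]
      nlinarith [(div_lt_iff₀ hk).mp h2]
    have h5 : M < k * (deriv d t / d t) := lt_of_lt_of_le h4 h3
    rw [hode t ht]
    have := abs_le.mp (hM t ht)
    linarith
  -- the integral identity
  set w : ℝ → ℝ := fun t => deriv d t + k * Real.log (d t) with hw
  have hident : ∀ T ≥ (0:ℝ), ∫ τ in (0:ℝ)..T, α τ = w 0 - w T := by
    intro T hT
    have hderivw : ∀ t ∈ Set.uIcc (0:ℝ) T, HasDerivAt w (-α t) t := by
      intro t ht
      rw [Set.uIcc_of_le hT] at ht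
      have hdt : 0 < d t := hpos t ht.1
      have h1 : HasDerivAt (deriv d) (deriv (deriv d) t) t := (hd2 t).hasDerivAt
      have h2 : HasDerivAt (fun s => Real.log (d s)) (deriv d t / d t) t :=
        ((hd1 t).hasDerivAt).log hdt.ne'
      have h3 : HasDerivAt w (deriv (deriv d) t + k * (deriv d t / d t)) t :=
        h1.add ((h2.const_mul k))
      have : deriv (deriv d) t + k * (deriv d t / d t) = -α t := by
        rw [hode t ht.1]; ring
      rwa [this] at h3
    have := intervalIntegral.integral_eq_sub_of_hasDerivAt hderivw
      ((hα_cont.neg).intervalIntegrable 0 T)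
    rw [intervalIntegral.integral_neg] at this
    linarith [this]
  -- conclusion
  have hlog : Tendsto (fun T => Real.log (d T)) atTop atBot := by
    apply Real.tendsto_log_nhdsGT_zero.comp
    rw [tendsto_nhdsWithin_iff]
    exact ⟨hlim, eventually_atTop.mpr ⟨0, fun t ht => hpos t ht⟩⟩
  have hlower : Tendsto (fun T => w 0 - B - k * Real.log (d T)) atTop atTop := by
    apply tendsto_atTop_add_const_left
    exact (tendsto_neg_atBot_atTop.comp (hlog.const_mul_atBot hk)).congr (fun T => by simp)
  apply tendsto_atTop_mono' _ _ hlower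
  filter_upwards [eventually_ge_atTop (0:ℝ)] with T hT
  rw [hident T hT]
  have := hderiv_bound T hT
  simp only [hw]
  linarith
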